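/- Let M be a positively ordered monoid, N ⊆ M a submonoid, f : N → [0,∞) a state on N (an additive, order-preserving map with f(0) = 0, where N carries the order induced from M), x ∈ M, and q a nonnegative real number. Assume: (i) for all y₁, y₂ ∈ N, all m ≥ 1 and all m̄ ∈ ℕ, if y₁ + m̄·x ≤ y₂ + (m+m̄)·x in M then f(y₁) ≤ f(y₂) + m·q; and (ii) for all z₁, z₂ ∈ N, all n ≥ 1 and all n̄ ∈ ℕ, if z₁ + (n+n̄)·x ≤ z₂ + n̄·x in M then f(z₁) + n·q ≤ f(z₂). Then the assignment y + k·x ↦ f(y) + k·q (for y ∈ N, k ∈ ℕ) is a well-defined state on the submonoid of M generated by N and x; in particular there exists a state f̃ on this submonoid extending f with f̃(x) = q. -/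

import Mathlib

open scoped NNReal

/-- Extension of states on submonoids of a positively ordered
monoid.  Given a state `f` on a submonoid `N` of a positively ordered monoid
`M`, an element `x : M` and a value `q ∈ [0,∞)` satisfying the two
compatibility conditions, the assignment `y + k•x ↦ f y + k•q` is a
well-defined state on the submonoid generated by `N` and `x`; in particular it
extends `f` and takes the value `q` at `x`. -/
theorem stmt1 {M : Type*} [AddCommMonoid M] [PartialOrder M] [IsOrderedAddMonoid M] (h0 : ∀ z : M, 0 ≤ z)
    (N : AddSubmonoid M) (f : N → ℝ≥0)
    (hf0 : f 0 = 0) (hfadd : ∀ u v : N, f (u + v) = f u + f v)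
    (hfmono : ∀ u v : N, (u : M) ≤ (v : M) → f u ≤ f v)
    (x : M) (q : ℝ≥0)
    (hi : ∀ (y₁ y₂ : N) (m : ℕ), 1 ≤ m → ∀ mb : ℕ,
      (y₁ : M) + mb • x ≤ (y₂ : M) + (m + mb) • x → f y₁ ≤ f y₂ + m • q)
    (hii : ∀ (z₁ z₂ : N) (n : ℕ), 1 ≤ n → ∀ nb : ℕ,
      (z₁ : M) + (n + nb) • x ≤ (z₂ : M) + nb • x → f z₁ + n • q ≤ f z₂) :
    ∃ g : (N ⊔ AddSubmonoid.closure {x} : AddSubmonoid M) → ℝ≥0,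
      g 0 = 0 ∧
      (∀ u v : (N ⊔ AddSubmonoid.closure {x} : AddSubmonoid M), g (u + v) = g u + g v) ∧
      (∀ u v : (N ⊔ AddSubmonoid.closure {x} : AddSubmonoid M),
        (u : M) ≤ (v : M) → g u ≤ g v) ∧
      (∀ (y : N) (k : ℕ) (u : (N ⊔ AddSubmonoid.closure {x} : AddSubmonoid M)),
        (u : M) = (y : M) + k • x → g u = f y + k • q) ∧
      (∀ (y : N) (hy : (y : M) ∈ (N ⊔ AddSubmonoid.closure {x} : AddSubmonoid M)),
        g ⟨y, hy⟩ = f y) ∧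
      (∀ hx : x ∈ (N ⊔ AddSubmonoid.closure {x} : AddSubmonoid M), g ⟨x, hx⟩ = q) := by
  -- f commutes with nsmul
  have hfsmul : ∀ (t : ℕ) (y : N), f (t • y) = t • f y := by
    intro t y
    induction t with
    | zero => simpa using hf0
    | succ n ih => rw [succ_nsmul, succ_nsmul, hfadd, ih]
  -- key inequality
  have key : ∀ (y₁ y₂ : N) (k₁ k₂ : ℕ), (y₁ : M) + k₁ • x ≤ (y₂ : M) + k₂ • x →
      f y₁ + k₁ • q ≤ f y₂ + k₂ • q := by
    intro y₁ y₂ k₁ k₂ hle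
    rcases le_or_gt k₁ k₂ with h | h
    · rcases Nat.eq_or_lt_of_le h with rfl | h'
      · -- equal case: Archimedean argument
        have step : ∀ t : ℕ, t • f y₁ ≤ t • f y₂ + q := by
          intro t
          have ht : ((t • y₁ : N) : M) + (t * k₁) • x ≤ ((t • y₂ : N) : M) + (t * k₁) • x := by
            have := nsmul_le_nsmul_right hle t
            simpa [smul_add, mul_smul] using this
          have ht2 : ((t • y₁ : N) : M) + (t * k₁) • x ≤ ((t • y₂ : N) : M) + (1 + t * k₁) • x := by
            refine ht.trans ?_
            rw [add_smul, one_smul, add_comm x, ← add_assoc]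
            exact le_add_of_nonneg_right (h0 x)
          have := hi (t • y₁) (t • y₂) 1 le_rfl (t * k₁) ht2
          simpa [hfsmul] using this
        have hfle : f y₁ ≤ f y₂ := by
          by_contra hcon
          push_neg at hcon
          set d : ℝ≥0 := f y₁ - f y₂ with hd
          have hdpos : 0 < d := tsub_pos_of_lt hcon
          obtain ⟨n, hn⟩ := Archimedean.arch q hdpos
          have h1 : f y₁ = f y₂ + d := by
            rw [hd, add_tsub_cancel_of_le hcon.le]
          have h2 := step (n + 1)
          rw [h1, smul_add] at h2
          have h3 : (n + 1) • d ≤ q := le_of_add_le_add_left h2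
          have h4 : n • d < (n + 1) • d := by
            rw [succ_nsmul]
            exact lt_add_of_pos_right _ hdpos
          exact absurd h3 (not_le.mpr (hn.trans_lt h4))
        exact add_le_add_left hfle _
      · obtain ⟨m, rfl⟩ : ∃ m, k₂ = m + k₁ := ⟨k₂ - k₁, by omega⟩
        have hm : 1 ≤ m := by omega
        have := hi y₁ y₂ m hm k₁ hle
        calc f y₁ + k₁ • q ≤ (f y₂ + m • q) + k₁ • q := add_le_add_left this _
          _ = f y₂ + (m + k₁) • q := by rw [add_smul, add_assoc]
    · obtain ⟨n, rfl⟩ : ∃ n, k₁ = n + k₂ := ⟨k₁ - k₂, by omega⟩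
      have hn : 1 ≤ n := by omega
      have := hii y₁ y₂ n hn k₂ hle
      calc f y₁ + (n + k₂) • q = (f y₁ + n • q) + k₂ • q := by rw [add_smul, add_assoc]
        _ ≤ f y₂ + k₂ • q := add_le_add_left this _
  -- representation
  have hrep : ∀ u : (N ⊔ AddSubmonoid.closure {x} : AddSubmonoid M),
      ∃ p : N × ℕ, (u : M) = (p.1 : M) + p.2 • x := by
    rintro ⟨z, hz⟩
    rw [AddSubmonoid.mem_sup] at hz
    obtain ⟨y, hy, w, hw, rfl⟩ := hz
    rw [AddSubmonoid.mem_closure_singleton] at hw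
    obtain ⟨k, rfl⟩ := hw
    exact ⟨(⟨y, hy⟩, k), rfl⟩
  set g : (N ⊔ AddSubmonoid.closure {x} : AddSubmonoid M) → ℝ≥0 :=
    fun u => f (Classical.choose (hrep u)).1 + (Classical.choose (hrep u)).2 • q with hg
  have gkey : ∀ (u : (N ⊔ AddSubmonoid.closure {x} : AddSubmonoid M)) (y : N) (k : ℕ),
      (u : M) = (y : M) + k • x → g u = f y + k • q := by
    intro u y k hu
    have hc := Classical.choose_spec (hrep u)
    have h1 : ((Classical.choose (hrep u)).1 : M) + (Classical.choose (hrep u)).2 • x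
        = (y : M) + k • x := hc.symm.trans hu
    exact le_antisymm (key _ _ _ _ h1.le) (key _ _ _ _ h1.ge)
  refine ⟨g, ?_, ?_, ?_, ?_, ?_, ?_⟩
  · have := gkey 0 0 0 (by simp)
    simpa [hf0] using this
  · intro u v
    obtain ⟨⟨y₁, k₁⟩, h₁⟩ := hrep u
    obtain ⟨⟨y₂, k₂⟩, h₂⟩ := hrep v
    have huv : ((u + v : _) : M) = ((y₁ + y₂ : N) : M) + (k₁ + k₂) • x := by
      push_cast [h₁, h₂]
      rw [add_smul]
      abel
    rw [gkey _ _ _ huv, gkey u y₁ k₁ h₁, gkey v y₂ k₂ h₂, hfadd, add_smul]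
    ring
  · intro u v hle
    obtain ⟨⟨y₁, k₁⟩, h₁⟩ := hrep u
    obtain ⟨⟨y₂, k₂⟩, h₂⟩ := hrep v
    rw [gkey u y₁ k₁ h₁, gkey v y₂ k₂ h₂]
    exact key _ _ _ _ (h₁ ▸ h₂ ▸ hle)
  · intro y k u hu
    exact gkey u y k hu
  · intro y hy
    simpa using gkey ⟨y, hy⟩ y 0 (by simp)
  · intro hx
    have := gkey ⟨x, hx⟩ 0 1 (by simp)
    simpa [hf0] using this
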